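/- arXiv:1806.06806 — 4 statements merged into one kernel-verified Lean document; each statement's English description precedes it below -/
import Mathlib

section
/- Let f : ℝ → ℝ be convex and M an n×n Hermitian (complex self-adjoint) matrix. Then the map M ↦ Tr f(M), where f is applied spectrally, is convex on the real vector space of n×n Hermitian matrices. -/
open Matrix Finset

lemma row_normSq_sum {n : ℕ} (P : Matrix (Fin n) (Fin n) ℂ) (h : P * star P = 1) (i : Fin n) :
    ∑ j, Complex.normSq (P i j) = 1 := by
  have h1 := congrArg (fun M : Matrix (Fin n) (Fin n) ℂ => M i i) h
  simp only [Matrix.mul_apply, Matrix.one_apply_eq, Matrix.star_apply, RCLike.star_def] at h1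
  have h2 : (((∑ j, Complex.normSq (P i j)) : ℝ) : ℂ) = 1 := by
    push_cast
    rw [← h1]
    exact Finset.sum_congr rfl fun j _ => (Complex.mul_conj (P i j)).symm
  exact_mod_cast h2

lemma col_normSq_sum {n : ℕ} (P : Matrix (Fin n) (Fin n) ℂ) (h : star P * P = 1) (j : Fin n) :
    ∑ i, Complex.normSq (P i j) = 1 := by
  have := row_normSq_sum (star P) (by rwa [star_star]) j
  simpa [Matrix.star_apply, Complex.normSq_conj] using this

lemma diag_conj {n : ℕ} (A : Matrix (Fin n) (Fin n) ℂ) (hA : A.IsHermitian)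
    (V : Matrix.unitaryGroup (Fin n) ℂ) (i : Fin n) :
    (star (V : Matrix (Fin n) (Fin n) ℂ) * A * V) i i =
      ((∑ j, Complex.normSq ((star (V : Matrix (Fin n) (Fin n) ℂ) *
        (hA.eigenvectorUnitary : Matrix (Fin n) (Fin n) ℂ)) i j) * hA.eigenvalues j : ℝ) : ℂ) := by
  set U := (hA.eigenvectorUnitary : Matrix (Fin n) (Fin n) ℂ) with hU
  set Vm := (V : Matrix (Fin n) (Fin n) ℂ) with hV
  set P := star Vm * U with hP
  have key : star Vm * A * Vm =
      P * diagonal (RCLike.ofReal ∘ hA.eigenvalues) * star P := by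
    conv_lhs => rw [hA.spectral_theorem, Unitary.conjStarAlgAut_apply]
    rw [hP, StarMul.star_mul, star_star]
    simp only [Matrix.mul_assoc, hU]
  rw [key]
  simp only [Matrix.mul_apply, Matrix.mul_diagonal, Matrix.star_apply, RCLike.star_def,
    Function.comp_apply, RCLike.ofReal_real_eq_id, id]
  push_cast
  refine Finset.sum_congr rfl fun j _ => ?_
  rw [Finset.sum_eq_single j (fun b _ hb => by rw [Matrix.diagonal_apply_ne _ hb, mul_zero])
    (fun h => absurd (Finset.mem_univ j) h)]
  rw [Matrix.diagonal_apply_eq, ← Complex.mul_conj (P i j)]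
  simp only [Function.comp_apply, RCLike.ofReal_real_eq_id, id_eq]
  exact mul_right_comm _ _ _


/-- **Klein's lemma.** If `f : ℝ → ℝ` is convex, then the map `M ↦ Tr f(M)`
(`f` applied spectrally, i.e. `Tr f(M) = ∑ i, f (λᵢ(M))`) is convex on the
real vector space of `n × n` Hermitian complex matrices. -/
theorem klein_lemma (n : ℕ) (f : ℝ → ℝ) (hf : ConvexOn ℝ Set.univ f)
    (A B : Matrix (Fin n) (Fin n) ℂ) (hA : A.IsHermitian) (hB : B.IsHermitian)
    (t : ℝ) (ht0 : 0 ≤ t) (ht1 : t ≤ 1)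
    (hC : (t • A + (1 - t) • B).IsHermitian) :
    ∑ i, f (hC.eigenvalues i) ≤
      t * ∑ i, f (hA.eigenvalues i) + (1 - t) * ∑ i, f (hB.eigenvalues i) := by
  set Vm := (hC.eigenvectorUnitary : Matrix (Fin n) (Fin n) ℂ) with hVm
  set Um := (hA.eigenvectorUnitary : Matrix (Fin n) (Fin n) ℂ) with hUm
  set Wm := (hB.eigenvectorUnitary : Matrix (Fin n) (Fin n) ℂ) with hWm
  set P := star Vm * Um with hPdef
  set Q := star Vm * Wm with hQdef
  set p : Fin n → Fin n → ℝ := fun i j => Complex.normSq (P i j) with hpdef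
  set q : Fin n → Fin n → ℝ := fun i j => Complex.normSq (Q i j) with hqdef
  set a : Fin n → ℝ := fun i => ∑ j, p i j * hA.eigenvalues j with hadef
  set b : Fin n → ℝ := fun i => ∑ j, q i j * hB.eigenvalues j with hbdef
  -- unitarity facts
  have hV1 : star Vm * Vm = 1 := Unitary.coe_star_mul_self hC.eigenvectorUnitary
  have hV2 : Vm * star Vm = 1 := Unitary.coe_mul_star_self hC.eigenvectorUnitary
  have hU1 : Um * star Um = 1 := Unitary.coe_mul_star_self hA.eigenvectorUnitary
  have hU2 : star Um * Um = 1 := Unitary.coe_star_mul_self hA.eigenvectorUnitary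
  have hW1 : Wm * star Wm = 1 := Unitary.coe_mul_star_self hB.eigenvectorUnitary
  have hW2 : star Wm * Wm = 1 := Unitary.coe_star_mul_self hB.eigenvectorUnitary
  have hPstar : star P = star Um * Vm := by rw [hPdef, StarMul.star_mul, star_star]
  have hQstar : star Q = star Wm * Vm := by rw [hQdef, StarMul.star_mul, star_star]
  have hP1 : P * star P = 1 := by
    rw [hPdef, hPstar, Matrix.mul_assoc, ← Matrix.mul_assoc Um, hU1, Matrix.one_mul, hV1]
  have hP2 : star P * P = 1 := by
    rw [hPdef, hPstar, Matrix.mul_assoc, ← Matrix.mul_assoc Vm, hV2, Matrix.one_mul, hU2]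
  have hQ1 : Q * star Q = 1 := by
    rw [hQdef, hQstar, Matrix.mul_assoc, ← Matrix.mul_assoc Wm, hW1, Matrix.one_mul, hV1]
  have hQ2 : star Q * Q = 1 := by
    rw [hQdef, hQstar, Matrix.mul_assoc, ← Matrix.mul_assoc Vm, hV2, Matrix.one_mul, hW2]
  have hprow : ∀ i, ∑ j, p i j = 1 := fun i => row_normSq_sum P hP1 i
  have hqrow : ∀ i, ∑ j, q i j = 1 := fun i => row_normSq_sum Q hQ1 i
  have hpcol : ∀ j, ∑ i, p i j = 1 := fun j => col_normSq_sum P hP2 j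
  have hqcol : ∀ j, ∑ i, q i j = 1 := fun j => col_normSq_sum Q hQ2 j
  -- eigenvalues of C as convex combinations
  have hμ : ∀ i, hC.eigenvalues i = t * a i + (1 - t) * b i := by
    intro i
    have h3 : (star Vm * (t • A + (1 - t) • B) * Vm) i i = ((hC.eigenvalues i : ℝ) : ℂ) := by
      have e := hC.conjStarAlgAut_star_eigenvectorUnitary
      rw [Unitary.conjStarAlgAut_apply, Unitary.coe_star, star_star] at e
      rw [hVm, e]
      simp [Matrix.diagonal_apply_eq]
    have hlin : star Vm * (t • A + (1 - t) • B) * Vm =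
        t • (star Vm * A * Vm) + (1 - t) • (star Vm * B * Vm) := by
      rw [Matrix.mul_add, Matrix.add_mul, Matrix.mul_smul, Matrix.smul_mul,
        Matrix.mul_smul, Matrix.smul_mul]
    have hAi := diag_conj A hA hC.eigenvectorUnitary i
    have hBi := diag_conj B hB hC.eigenvectorUnitary i
    rw [hlin] at h3
    simp only [Matrix.add_apply, Matrix.smul_apply] at h3
    rw [hAi, hBi] at h3
    have h4 : ((t * a i + (1 - t) * b i : ℝ) : ℂ) = ((hC.eigenvalues i : ℝ) : ℂ) := by
      rw [← h3]
      push_cast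
      simp [Complex.real_smul, hadef, hbdef, hpdef, hqdef, hPdef, hQdef, hVm, hUm, hWm]
    exact (Complex.ofReal_inj.mp h4).symm
  -- Jensen for each i
  have hja : ∀ i, f (a i) ≤ ∑ j, p i j * f (hA.eigenvalues j) := by
    intro i
    have := hf.map_sum_le (t := Finset.univ) (w := p i) (p := fun j => hA.eigenvalues j)
      (fun j _ => Complex.normSq_nonneg _) (hprow i) (fun j _ => Set.mem_univ _)
    simpa [smul_eq_mul, hadef] using this
  have hjb : ∀ i, f (b i) ≤ ∑ j, q i j * f (hB.eigenvalues j) := by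
    intro i
    have := hf.map_sum_le (t := Finset.univ) (w := q i) (p := fun j => hB.eigenvalues j)
      (fun j _ => Complex.normSq_nonneg _) (hqrow i) (fun j _ => Set.mem_univ _)
    simpa [smul_eq_mul, hbdef] using this
  -- double-stochastic sums
  have hsa : ∑ i, ∑ j, p i j * f (hA.eigenvalues j) = ∑ j, f (hA.eigenvalues j) := by
    rw [Finset.sum_comm]
    refine Finset.sum_congr rfl fun j _ => ?_
    rw [← Finset.sum_mul, hpcol j, one_mul]
  have hsb : ∑ i, ∑ j, q i j * f (hB.eigenvalues j) = ∑ j, f (hB.eigenvalues j) := by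
    rw [Finset.sum_comm]
    refine Finset.sum_congr rfl fun j _ => ?_
    rw [← Finset.sum_mul, hqcol j, one_mul]
  have step1 : ∑ i, f (hC.eigenvalues i) ≤ t * ∑ i, f (a i) + (1 - t) * ∑ i, f (b i) := by
    rw [Finset.mul_sum, Finset.mul_sum, ← Finset.sum_add_distrib]
    refine Finset.sum_le_sum fun i _ => ?_
    rw [hμ i]
    have := hf.2 (Set.mem_univ (a i)) (Set.mem_univ (b i)) ht0 (by linarith : (0:ℝ) ≤ 1 - t) (by ring : t + (1 - t) = 1)
    simpa [smul_eq_mul] using this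
  have step2 : ∑ i, f (a i) ≤ ∑ j, f (hA.eigenvalues j) := by
    rw [← hsa]; exact Finset.sum_le_sum fun i _ => hja i
  have step3 : ∑ i, f (b i) ≤ ∑ j, f (hB.eigenvalues j) := by
    rw [← hsb]; exact Finset.sum_le_sum fun i _ => hjb i
  calc ∑ i, f (hC.eigenvalues i) ≤ t * ∑ i, f (a i) + (1 - t) * ∑ i, f (b i) := step1
    _ ≤ t * ∑ i, f (hA.eigenvalues i) + (1 - t) * ∑ i, f (hB.eigenvalues i) := by
        have h1 : 0 ≤ 1 - t := by linarith
        gcongr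
end

section
/- Let f : ℝ≥0 → ℝ and α > 0 be such that x ↦ f(x²) - (α/2)x² is convex on ℝ. Then for any fixed diagonal values (t₁₁,…,tₙₙ) ∈ ℂⁿ, the function sending the strictly-upper-triangular entries (t_{ij})_{i<j} ∈ ℂ^{n(n-1)/2} to Tr f(T*T) - (α/2) ∑_{i<j} |t_{ij}|² is convex, where T is the upper triangular matrix with entries (t_{ij})_{i≤j}. -/
open Matrix Polynomial

section AuxCharpoly
variable {m : Type*} [Fintype m] [DecidableEq m]

private lemma aux_charmatrix_eq (N : Matrix m m ℂ) :
    charmatrix N = (X : ℂ[X]) • (1 : Matrix m m ℂ[X]) - N.map (C : ℂ →+* ℂ[X]) := by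
  ext i j
  by_cases h : i = j <;>
    simp [charmatrix_apply, h, Matrix.diagonal_apply, Matrix.one_apply, Matrix.smul_apply,
      smul_eq_mul]

private lemma aux_charpoly_diagonal (v : m → ℂ) :
    (Matrix.diagonal v).charpoly = ∏ i, (X - C (v i)) := by
  have h : charmatrix (Matrix.diagonal v) = Matrix.diagonal fun i => (X : ℂ[X]) - C (v i) := by
    ext i j
    by_cases h : i = j <;> simp [h, Matrix.diagonal_apply]
  rw [Matrix.charpoly, h, Matrix.det_diagonal]

private lemma aux_charpoly_unitary_conj (U : Matrix.unitaryGroup m ℂ) (M : Matrix m m ℂ) :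
    ((U : Matrix m m ℂ) * M * (star U : Matrix m m ℂ)).charpoly = M.charpoly := by
  have hUU : (U : Matrix m m ℂ) * (star U : Matrix m m ℂ) = 1 :=
    (Matrix.mem_unitaryGroup_iff).mp U.2
  set U' : Matrix m m ℂ[X] := (U : Matrix m m ℂ).map (C : ℂ →+* ℂ[X]) with hU'
  set U'' : Matrix m m ℂ[X] := (star U : Matrix m m ℂ).map (C : ℂ →+* ℂ[X]) with hU''
  have hmul : U' * U'' = 1 := by
    rw [hU', hU'', ← Matrix.map_mul, hUU, Matrix.map_one _ (map_zero _) (map_one _)]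
  have key : charmatrix ((U : Matrix m m ℂ) * M * (star U : Matrix m m ℂ))
      = U' * charmatrix M * U'' := by
    rw [aux_charmatrix_eq, aux_charmatrix_eq, Matrix.mul_sub, Matrix.sub_mul,
      Matrix.map_mul, Matrix.map_mul, Matrix.mul_smul, Matrix.smul_mul, mul_one, hmul]
  rw [Matrix.charpoly, Matrix.charpoly, key, Matrix.det_mul, Matrix.det_mul]
  have h1 : U'.det * U''.det = 1 := by
    rw [← Matrix.det_mul, hmul, Matrix.det_one]
  calc U'.det * (charmatrix M).det * U''.det
      = (charmatrix M).det * (U'.det * U''.det) := by ring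
    _ = (charmatrix M).det := by rw [h1, mul_one]

private lemma aux_charpoly_mul_comm (M N : Matrix m m ℂ) :
    (M * N).charpoly = (N * M).charpoly := by
  classical
  set F := FractionRing ℂ[X]
  have hinj : Function.Injective (algebraMap ℂ[X] F) := IsFractionRing.injective _ _
  apply hinj
  set φ : ℂ[X] →+* F := (algebraMap ℂ[X] F : ℂ[X] →+* F) with hφ
  set ψ : ℂ →+* F := φ.comp (C : ℂ →+* ℂ[X]) with hψ
  set x : F := φ X with hx
  have hx0 : x ≠ 0 := by
    intro h
    have : (X : ℂ[X]) = 0 := hinj (by simpa [hx] using h)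
    exact Polynomial.X_ne_zero this
  have key : ∀ P Q : Matrix m m ℂ, φ ((P * Q).charpoly)
      = x ^ (Fintype.card m) * (1 - x⁻¹ • ((P.map ψ) * (Q.map ψ))).det := by
    intro P Q
    have h1 : φ ((P * Q).charpoly) = ((charmatrix (P * Q)).map φ).det := by
      rw [Matrix.charpoly, RingHom.map_det]; rfl
    have h2 : (charmatrix (P * Q)).map φ = x • (1 : Matrix m m F) - ((P * Q).map ψ) := by
      ext i j
      by_cases h : i = j <;>
        simp [charmatrix_apply, h, Matrix.diagonal_apply, Matrix.one_apply, Matrix.smul_apply,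
          Matrix.map_apply, map_sub, hψ, hx, smul_eq_mul]
    have h3 : ((P * Q).map ψ) = (P.map ψ) * (Q.map ψ) := Matrix.map_mul
    have h4 : x • (1 : Matrix m m F) - (P.map ψ) * (Q.map ψ)
        = x • ((1 : Matrix m m F) - x⁻¹ • ((P.map ψ) * (Q.map ψ))) := by
      rw [smul_sub, smul_smul, mul_inv_cancel₀ hx0, one_smul]
    rw [h1, h2, h3, h4, Matrix.det_smul]
  rw [key M N, key N M]
  congr 1
  have h5 : x⁻¹ • ((M.map ψ) * (N.map ψ)) = (x⁻¹ • M.map ψ) * (N.map ψ) := by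
    rw [Matrix.smul_mul]
  have h6 : x⁻¹ • ((N.map ψ) * (M.map ψ)) = (N.map ψ) * (x⁻¹ • M.map ψ) := by
    rw [Matrix.mul_smul]
  rw [h5, h6, Matrix.det_one_sub_mul_comm]

private lemma aux_roots_prod (v : m → ℂ) :
    (∏ i, ((X : ℂ[X]) - C (v i))).roots = Multiset.map v Finset.univ.val := by
  rw [Finset.prod_eq_multiset_prod]
  have := Polynomial.roots_multiset_prod_X_sub_C (Finset.univ.val.map v)
  rw [Multiset.map_map] at this
  exact this

private lemma aux_charpoly_hermitian {A : Matrix m m ℂ} (hA : A.IsHermitian) :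
    A.charpoly = ∏ i, (X - C ((hA.eigenvalues i : ℂ))) := by
  conv_lhs => rw [hA.spectral_theorem, Unitary.conjStarAlgAut_apply]
  rw [aux_charpoly_unitary_conj, aux_charpoly_diagonal]
  rfl

private lemma aux_dilation_isHermitian (A : Matrix m m ℂ) :
    (Matrix.fromBlocks 0 A Aᴴ 0 : Matrix (m ⊕ m) (m ⊕ m) ℂ).IsHermitian :=
  Matrix.IsHermitian.fromBlocks (Matrix.isHermitian_zero) rfl (Matrix.isHermitian_zero)

private lemma aux_sq_eig_sum (A : Matrix m m ℂ) (hK : (Aᴴ * A).IsHermitian) (φ : ℝ → ℝ) :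
    ∑ j, φ (((aux_dilation_isHermitian A).eigenvalues j) ^ 2)
      = 2 * ∑ i, φ (hK.eigenvalues i) := by
  classical
  set H : Matrix (m ⊕ m) (m ⊕ m) ℂ := Matrix.fromBlocks 0 A Aᴴ 0 with hHdef
  set hH : H.IsHermitian := aux_dilation_isHermitian A
  set μ : (m ⊕ m) → ℝ := hH.eigenvalues
  set lam : m → ℝ := hK.eigenvalues
  have hblock : H * H = Matrix.fromBlocks (A * Aᴴ) 0 0 (Aᴴ * A) := by
    rw [hHdef, Matrix.fromBlocks_multiply]
    simp
  have hspec : H * H = (hH.eigenvectorUnitary : Matrix (m ⊕ m) (m ⊕ m) ℂ)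
      * Matrix.diagonal (fun j => ((μ j : ℂ)) ^ 2)
      * (star (hH.eigenvectorUnitary : Matrix (m ⊕ m) (m ⊕ m) ℂ)) := by
    conv_lhs => rw [hH.spectral_theorem, Unitary.conjStarAlgAut_apply]
    set U := (hH.eigenvectorUnitary : Matrix (m ⊕ m) (m ⊕ m) ℂ)
    have hU : star U * U = 1 := Matrix.UnitaryGroup.star_mul_self _
    have h9 : (U * Matrix.diagonal (RCLike.ofReal ∘ μ) * star U)
        * (U * Matrix.diagonal (RCLike.ofReal ∘ μ) * star U)
        = U * (Matrix.diagonal (RCLike.ofReal ∘ μ)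
            * Matrix.diagonal (RCLike.ofReal ∘ μ)) * star U := by
      have hmid : star U * (U * (Matrix.diagonal (RCLike.ofReal ∘ μ) * star U))
          = Matrix.diagonal (RCLike.ofReal ∘ μ) * star U := by
        rw [← Matrix.mul_assoc, hU, Matrix.one_mul]
      simp only [Matrix.mul_assoc]
      rw [hmid]
    rw [h9, Matrix.diagonal_mul_diagonal]
    congr 2
    funext j
    simp [sq]
  have h1 : (H * H).charpoly = ∏ j, (X - C ((μ j : ℂ) ^ 2)) := by
    rw [hspec, aux_charpoly_unitary_conj, aux_charpoly_diagonal]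
  have h2 : (H * H).charpoly = (Aᴴ * A).charpoly * (Aᴴ * A).charpoly := by
    rw [hblock, Matrix.charpoly_fromBlocks_zero₁₂, aux_charpoly_mul_comm]
  have hroots : Multiset.map (fun j => ((μ j : ℂ)) ^ 2) Finset.univ.val
      = Multiset.map (fun i => ((lam i : ℂ))) Finset.univ.val
        + Multiset.map (fun i => ((lam i : ℂ))) Finset.univ.val := by
    have hne : (Aᴴ * A).charpoly ≠ 0 := (Matrix.charpoly_monic _).ne_zero
    have := congrArg Polynomial.roots (h1.symm.trans h2)
    rwa [aux_roots_prod, Polynomial.roots_mul (mul_ne_zero hne hne),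
      aux_charpoly_hermitian hK, aux_roots_prod] at this
  have := congrArg (fun s : Multiset ℂ => (s.map (fun z => φ z.re)).sum) hroots
  simp only [Multiset.map_map, Multiset.map_add, Multiset.sum_add, Function.comp] at this
  simp only [← Complex.ofReal_pow, Complex.ofReal_re] at this
  rw [Finset.sum_eq_multiset_sum, this, two_mul, Finset.sum_eq_multiset_sum]

private lemma aux_trace_eq (A : Matrix m m ℂ) (hK : (Aᴴ * A).IsHermitian) :
    ∑ i, hK.eigenvalues i = ∑ i, ∑ j, Complex.normSq (A i j) := by
  apply Complex.ofReal_injective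
  have h1 : ((∑ i, hK.eigenvalues i : ℝ) : ℂ) = (Aᴴ * A).trace := by
    conv_rhs => rw [hK.spectral_theorem, Unitary.conjStarAlgAut_apply]
    rw [Matrix.trace_mul_cycle, Matrix.UnitaryGroup.star_mul_self, Matrix.one_mul]
    simp [Matrix.trace_diagonal]
  rw [h1, Matrix.trace]
  push_cast
  rw [Finset.sum_comm]
  apply Finset.sum_congr rfl
  intro j _
  rw [Matrix.diag_apply, Matrix.mul_apply]
  apply Finset.sum_congr rfl
  intro i _
  rw [Matrix.conjTranspose_apply]
  simp [Complex.star_def, Complex.normSq_eq_conj_mul_self]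

private lemma aux_peierls (g : ℝ → ℝ) (hg : ConvexOn ℝ Set.univ g) {X : Matrix m m ℂ}
    (hX : X.IsHermitian) (U : Matrix.unitaryGroup m ℂ) :
    ∑ j, g (((star (U : Matrix m m ℂ) * X * (U : Matrix m m ℂ)) j j).re)
      ≤ ∑ j, g (hX.eigenvalues j) := by
  classical
  set ν : m → ℝ := hX.eigenvalues
  set V : Matrix m m ℂ := (hX.eigenvectorUnitary : Matrix m m ℂ) with hV
  set R : Matrix m m ℂ := star (U : Matrix m m ℂ) * V with hRdef
  have hVV : V * star V = 1 := hX.eigenvectorUnitary.2.2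
  have hVV' : star V * V = 1 := hX.eigenvectorUnitary.2.1
  have hUU : (U : Matrix m m ℂ) * star (U : Matrix m m ℂ) = 1 := U.2.2
  have hUU' : star (U : Matrix m m ℂ) * (U : Matrix m m ℂ) = 1 := U.2.1
  have hstarR : star R = star V * (U : Matrix m m ℂ) := by
    rw [hRdef, StarMul.star_mul, star_star]
  have hR1 : R * star R = 1 := by
    rw [hRdef, hstarR, Matrix.mul_assoc, ← Matrix.mul_assoc V, hVV, Matrix.one_mul, hUU']
  have hR2 : star R * R = 1 := by
    rw [hRdef, hstarR, Matrix.mul_assoc, ← Matrix.mul_assoc (U : Matrix m m ℂ), hUU,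
      Matrix.one_mul, hVV']
  set p : m → m → ℝ := fun j k => Complex.normSq (R j k) with hp
  have hp0 : ∀ j k, 0 ≤ p j k := fun j k => Complex.normSq_nonneg _
  have hrow : ∀ j, ∑ k, p j k = 1 := by
    intro j
    apply Complex.ofReal_injective
    push_cast
    have h := congrFun (congrFun hR1 j) j
    rw [Matrix.mul_apply] at h
    simp only [Matrix.one_apply_eq] at h
    rw [← h]
    apply Finset.sum_congr rfl
    intro k _
    simp [Matrix.star_apply, Complex.star_def, Complex.mul_conj, hp]
  have hcol : ∀ k, ∑ j, p j k = 1 := by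
    intro k
    apply Complex.ofReal_injective
    push_cast
    have h := congrFun (congrFun hR2 k) k
    rw [Matrix.mul_apply] at h
    simp only [Matrix.one_apply_eq] at h
    rw [← h]
    apply Finset.sum_congr rfl
    intro j _
    simp [Matrix.star_apply, Complex.star_def, Complex.normSq_eq_conj_mul_self, hp]
  have hconj : star (U : Matrix m m ℂ) * X * (U : Matrix m m ℂ)
      = R * Matrix.diagonal (RCLike.ofReal ∘ ν) * star R := by
    conv_lhs => rw [hX.spectral_theorem, Unitary.conjStarAlgAut_apply]
    rw [hstarR, hRdef]
    simp only [Matrix.mul_assoc]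
    rfl
  have hentry : ∀ j, ((star (U : Matrix m m ℂ) * X * (U : Matrix m m ℂ)) j j).re
      = ∑ k, p j k * ν k := by
    intro j
    rw [hconj]
    have h3 : ((R * Matrix.diagonal (RCLike.ofReal ∘ ν) * star R : Matrix m m ℂ)) j j
        = ((∑ k, p j k * ν k : ℝ) : ℂ) := by
      rw [Matrix.mul_apply]
      push_cast
      apply Finset.sum_congr rfl
      intro k _
      rw [Matrix.mul_diagonal, Matrix.star_apply]
      have h2 : R j k * star (R j k) = ((p j k : ℝ) : ℂ) := by
        rw [Complex.star_def, Complex.mul_conj]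
      calc R j k * (RCLike.ofReal ∘ ν) k * star (R j k)
          = (R j k * star (R j k)) * ((ν k : ℝ) : ℂ) := by
            simp only [Function.comp_apply, RCLike.ofReal]
            exact mul_right_comm _ _ _
        _ = ((p j k : ℝ) : ℂ) * ((ν k : ℝ) : ℂ) := by rw [h2]
    rw [h3, Complex.ofReal_re]
  calc ∑ j, g (((star (U : Matrix m m ℂ) * X * (U : Matrix m m ℂ)) j j).re)
      = ∑ j, g (∑ k, p j k * ν k) := Finset.sum_congr rfl fun j _ => by rw [hentry j]
    _ ≤ ∑ j, ∑ k, p j k * g (ν k) := by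
        apply Finset.sum_le_sum
        intro j _
        have := hg.map_sum_le (fun k _ => hp0 j k) (hrow j) (fun k _ => Set.mem_univ (ν k))
        simpa [smul_eq_mul] using this
    _ = ∑ k, (∑ j, p j k) * g (ν k) := by
        rw [Finset.sum_comm]
        exact Finset.sum_congr rfl fun k _ => by rw [Finset.sum_mul]
    _ = ∑ k, g (ν k) := Finset.sum_congr rfl fun k _ => by rw [hcol k, one_mul]

private lemma aux_eig_sum_convex (g : ℝ → ℝ) (hg : ConvexOn ℝ Set.univ g)
    {X Y Z : Matrix m m ℂ} (hX : X.IsHermitian) (hY : Y.IsHermitian) (hZ : Z.IsHermitian)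
    {a b : ℝ} (ha : 0 ≤ a) (hb : 0 ≤ b) (hab : a + b = 1) (hZeq : Z = a • X + b • Y) :
    ∑ j, g (hZ.eigenvalues j)
      ≤ a * ∑ j, g (hX.eigenvalues j) + b * ∑ j, g (hY.eigenvalues j) := by
  classical
  set U := hZ.eigenvectorUnitary
  have hdiag : star (U : Matrix m m ℂ) * Z * (U : Matrix m m ℂ)
      = Matrix.diagonal (RCLike.ofReal ∘ hZ.eigenvalues) := by
    have := hZ.conjStarAlgAut_star_eigenvectorUnitary; rwa [Unitary.conjStarAlgAut_star_apply] at this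
  have hsplit : star (U : Matrix m m ℂ) * Z * (U : Matrix m m ℂ)
      = a • (star (U : Matrix m m ℂ) * X * (U : Matrix m m ℂ))
        + b • (star (U : Matrix m m ℂ) * Y * (U : Matrix m m ℂ)) := by
    rw [hZeq]
    rw [Matrix.mul_add, Matrix.add_mul, Matrix.mul_smul, Matrix.smul_mul, Matrix.mul_smul,
      Matrix.smul_mul]
  have heig : ∀ j, hZ.eigenvalues j
      = a * ((star (U : Matrix m m ℂ) * X * (U : Matrix m m ℂ)) j j).re
        + b * ((star (U : Matrix m m ℂ) * Y * (U : Matrix m m ℂ)) j j).re := by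
    intro j
    have h := congrFun (congrFun (hdiag.symm.trans hsplit) j) j
    simp only [Matrix.diagonal_apply_eq, Function.comp_apply, Matrix.add_apply,
      Matrix.smul_apply] at h
    have := congrArg Complex.re h
    simpa [Complex.smul_re] using this
  calc ∑ j, g (hZ.eigenvalues j)
      ≤ ∑ j, (a * g (((star (U : Matrix m m ℂ) * X * (U : Matrix m m ℂ)) j j).re)
          + b * g (((star (U : Matrix m m ℂ) * Y * (U : Matrix m m ℂ)) j j).re)) := by
        apply Finset.sum_le_sum
        intro j _
        rw [heig j]
        have := hg.2 (Set.mem_univ (((star (U : Matrix m m ℂ) * X * (U : Matrix m m ℂ)) j j).re))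
          (Set.mem_univ (((star (U : Matrix m m ℂ) * Y * (U : Matrix m m ℂ)) j j).re)) ha hb hab
        simpa [smul_eq_mul] using this
    _ = a * ∑ j, g (((star (U : Matrix m m ℂ) * X * (U : Matrix m m ℂ)) j j).re)
          + b * ∑ j, g (((star (U : Matrix m m ℂ) * Y * (U : Matrix m m ℂ)) j j).re) := by
        rw [Finset.sum_add_distrib, Finset.mul_sum, Finset.mul_sum]
    _ ≤ a * ∑ j, g (hX.eigenvalues j) + b * ∑ j, g (hY.eigenvalues j) :=
        add_le_add (mul_le_mul_of_nonneg_left (aux_peierls g hg hX U) ha)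
          (mul_le_mul_of_nonneg_left (aux_peierls g hg hY U) hb)

end AuxCharpoly

open ComplexOrder in
/-- Let `f : ℝ≥0 → ℝ` and `α > 0` be such that `x ↦ f(x²) - (α/2)x²` is convex on `ℝ`.
Then for any fixed diagonal entries `d = (t₁₁, …, tₙₙ) ∈ ℂⁿ`, the map sending the
strictly upper triangular entries `u = (t_{ij})_{i<j}` to
`Tr f(TᴴT) - (α/2) ∑_{i<j} |t_{ij}|²` is convex, where `T` is the upper triangular
matrix with diagonal `d` and strictly upper entries `u`, and `f` is applied
spectrally (`Tr f(TᴴT) = ∑ i, f (λᵢ(TᴴT))`). -/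
theorem convex_trace_f_upperTriangular (n : ℕ) (f : NNReal → ℝ) (α : ℝ) (hα : 0 < α)
    (hconv : ConvexOn ℝ Set.univ fun x : ℝ => f (x ^ 2).toNNReal - α / 2 * x ^ 2)
    (d : Fin n → ℂ)
    (T : ({p : Fin n × Fin n // p.1 < p.2} → ℂ) → Matrix (Fin n) (Fin n) ℂ)
    (hT : ∀ u, T u = Matrix.of fun i j =>
      if h : i < j then u ⟨(i, j), h⟩ else if i = j then d i else 0) :
    ConvexOn ℝ Set.univ fun u : {p : Fin n × Fin n // p.1 < p.2} → ℂ =>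
      (∑ i, f ((Matrix.posSemidef_conjTranspose_mul_self (T u)).1.eigenvalues i).toNNReal)
        - α / 2 * ∑ p : {p : Fin n × Fin n // p.1 < p.2}, ‖u p‖ ^ 2 := by
  classical
  set g : ℝ → ℝ := fun x => f (x ^ 2).toNNReal - α / 2 * x ^ 2 with hgdef
  set φ : ℝ → ℝ := fun t => f t.toNNReal - α / 2 * t with hφdef
  set Sd : ℝ := ∑ i, Complex.normSq (d i) with hSd
  -- entrywise norm-squared sum of T u
  have hentry : ∀ u : {p : Fin n × Fin n // p.1 < p.2} → ℂ,
      ∑ i, ∑ j, Complex.normSq ((T u) i j)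
        = (∑ p : {p : Fin n × Fin n // p.1 < p.2}, Complex.normSq (u p)) + Sd := by
    intro u
    have hfold : ∑ i, ∑ j, Complex.normSq ((T u) i j)
        = ∑ q : Fin n × Fin n, Complex.normSq ((T u) q.1 q.2) :=
      (Fintype.sum_prod_type (fun q : Fin n × Fin n => Complex.normSq ((T u) q.1 q.2))).symm
    rw [hfold]
    have hsum : ∀ q : Fin n × Fin n, Complex.normSq ((T u) q.1 q.2)
        = (if h : q.1 < q.2 then Complex.normSq (u ⟨q, h⟩) else 0)
          + (if q.1 = q.2 then Complex.normSq (d q.1) else 0) := by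
      intro q
      rw [hT]
      by_cases h : q.1 < q.2
      · simp [h, Matrix.of_apply, ne_of_lt h]
      · by_cases h2 : q.1 = q.2 <;> simp [h, h2, Matrix.of_apply]
    rw [Finset.sum_congr rfl fun q _ => hsum q, Finset.sum_add_distrib]
    congr 1
    · -- dite sum equals subtype sum
      rw [← Finset.sum_filter_of_ne (p := fun q : Fin n × Fin n => q.1 < q.2)
        (by intro q _ hne; by_contra h; exact hne (dif_neg h))]
      have h7 := Finset.sum_subtype
        (p := fun q : Fin n × Fin n => q.1 < q.2)
        (F := inferInstance)
        (s := Finset.univ.filter fun q : Fin n × Fin n => q.1 < q.2)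
        (by intro q; simp)
        (fun q : Fin n × Fin n => if h : q.1 < q.2 then Complex.normSq (u ⟨q, h⟩) else 0)
      rw [h7]
      apply Finset.sum_congr rfl
      intro p _
      rw [dif_pos p.2]
    · rw [Fintype.sum_prod_type]
      simp [hSd]
  -- pointwise identity relating target to dilation eigenvalue sums
  have hpoint : ∀ u : {p : Fin n × Fin n // p.1 < p.2} → ℂ,
      (∑ i, f ((Matrix.posSemidef_conjTranspose_mul_self (T u)).1.eigenvalues i).toNNReal)
        - α / 2 * ∑ p : {p : Fin n × Fin n // p.1 < p.2}, ‖u p‖ ^ 2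
      = (1 / 2) * (∑ j, g ((aux_dilation_isHermitian (T u)).eigenvalues j)) + α / 2 * Sd := by
    intro u
    have hsq := aux_sq_eig_sum (T u) (Matrix.posSemidef_conjTranspose_mul_self (T u)).1 φ
    have hg_eq : ∀ x : ℝ, g x = φ (x ^ 2) := fun x => rfl
    have htr := aux_trace_eq (T u) (Matrix.posSemidef_conjTranspose_mul_self (T u)).1
    have hnorm : ∀ p : {p : Fin n × Fin n // p.1 < p.2}, ‖u p‖ ^ 2 = Complex.normSq (u p) := by
      intro p
      rw [Complex.sq_norm]
    rw [Finset.sum_congr rfl fun p _ => hnorm p]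
    rw [Finset.sum_congr (rfl :
        (Finset.univ : Finset (Fin n ⊕ Fin n)) = Finset.univ) fun j _ => hg_eq _, hsq]
    have hφsum : ∑ i, φ ((Matrix.posSemidef_conjTranspose_mul_self (T u)).1.eigenvalues i)
        = (∑ i, f ((Matrix.posSemidef_conjTranspose_mul_self (T u)).1.eigenvalues i).toNNReal)
          - α / 2 * ((∑ p : {p : Fin n × Fin n // p.1 < p.2}, Complex.normSq (u p)) + Sd) := by
      rw [hφdef]
      rw [Finset.sum_sub_distrib, ← Finset.mul_sum, htr, hentry u]
    rw [hφsum]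
    ring
  have hfun : (fun u : {p : Fin n × Fin n // p.1 < p.2} → ℂ =>
      (∑ i, f ((Matrix.posSemidef_conjTranspose_mul_self (T u)).1.eigenvalues i).toNNReal)
        - α / 2 * ∑ p : {p : Fin n × Fin n // p.1 < p.2}, ‖u p‖ ^ 2)
      = fun u => (1 / 2) * (∑ j, g ((aux_dilation_isHermitian (T u)).eigenvalues j))
          + α / 2 * Sd := funext hpoint
  rw [hfun]
  refine ⟨convex_univ, fun u _ v _ a b ha hb hab => ?_⟩
  simp only [smul_eq_mul]
  -- affinity of T and of the dilation
  have hTaff : T (a • u + b • v) = a • T u + b • T v := by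
    have hab' : (a : ℂ) + (b : ℂ) = 1 := by exact_mod_cast congrArg Complex.ofReal hab
    rw [hT, hT, hT]
    ext i j
    by_cases h : i < j
    · simp [h, Matrix.of_apply, Matrix.add_apply, Matrix.smul_apply]
    · by_cases h2 : i = j
      · simp only [Matrix.of_apply, dif_neg h, if_pos h2, Matrix.add_apply, Matrix.smul_apply,
          dif_neg h]
        rw [← add_smul, hab, one_smul]
      · simp [h, h2, Matrix.of_apply, Matrix.add_apply, Matrix.smul_apply]
  have hHaff : (Matrix.fromBlocks 0 (T (a • u + b • v)) (T (a • u + b • v))ᴴ 0 :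
      Matrix (Fin n ⊕ Fin n) (Fin n ⊕ Fin n) ℂ)
      = a • (Matrix.fromBlocks 0 (T u) (T u)ᴴ 0)
        + b • (Matrix.fromBlocks 0 (T v) (T v)ᴴ 0) := by
    rw [hTaff, Matrix.conjTranspose_add, Matrix.conjTranspose_smul, Matrix.conjTranspose_smul,
      star_trivial, star_trivial, Matrix.fromBlocks_smul, Matrix.fromBlocks_smul,
      Matrix.fromBlocks_add]
    simp
  have hS := aux_eig_sum_convex g hconv
    (aux_dilation_isHermitian (T u)) (aux_dilation_isHermitian (T v))
    (aux_dilation_isHermitian (T (a • u + b • v))) ha hb hab hHaff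
  have hc : a * (α / 2 * Sd) + b * (α / 2 * Sd) = α / 2 * Sd := by
    rw [← add_mul, hab, one_mul]
  nlinarith [hS, hc]
end

section
/- Let T be an n×n upper triangular complex matrix whose diagonal entries t₁₁,…,tₙₙ are pairwise distinct. Then the real-linear map M ↦ π(MT − TM) from the skew-Hermitian matrices with zero diagonal to the strictly lower triangular matrices (π the projection onto the strictly lower triangular part) is a real-linear isomorphism. -/
open Matrix

/-- The real vector space `iH₀` of skew-Hermitian `n × n` complex matrices with
zero diagonal. -/
noncomputable def iH0 (n : ℕ) : Submodule ℝ (Matrix (Fin n) (Fin n) ℂ) where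
  carrier := {M | Mᴴ = -M ∧ ∀ i, M i i = 0}
  add_mem' := by
    rintro a b ⟨ha1, ha2⟩ ⟨hb1, hb2⟩
    refine ⟨by simp [conjTranspose_add, ha1, hb1, add_comm], fun i => by simp [Matrix.add_apply, ha2 i, hb2 i]⟩
  zero_mem' := by simp
  smul_mem' := by
    rintro c M ⟨h1, h2⟩
    refine ⟨by simp [conjTranspose_smul, h1], fun i => by simp [h2 i]⟩

/-- The real vector space `T^sl` of strictly lower triangular `n × n` complex
matrices. -/
noncomputable def Tsl (n : ℕ) : Submodule ℝ (Matrix (Fin n) (Fin n) ℂ) where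
  carrier := {M | ∀ i j : Fin n, i ≤ j → M i j = 0}
  add_mem' := by
    intro a b ha hb i j hij
    simp [Matrix.add_apply, ha i j hij, hb i j hij]
  zero_mem' := by simp
  smul_mem' := by
    intro c M h i j hij
    simp [h i j hij]

/-- The projection `π` onto the strictly lower triangular part. -/
noncomputable def lowerProj (n : ℕ) (X : Matrix (Fin n) (Fin n) ℂ) : Matrix (Fin n) (Fin n) ℂ :=
  Matrix.of fun i j => if j < i then X i j else 0

noncomputable def lowEquiv (n : ℕ) : iH0 n ≃ₗ[ℝ] Tsl n where
  toFun M := ⟨lowerProj n (M : Matrix (Fin n) (Fin n) ℂ),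
    fun i j hij => by simp [lowerProj, Matrix.of_apply, not_lt.mpr hij]⟩
  map_add' M N := by
    ext i j
    by_cases h : j < i <;> simp [lowerProj, Matrix.sub_apply, Matrix.add_apply, h]
  map_smul' c M := by
    ext i j
    by_cases h : j < i <;> simp [lowerProj, Matrix.smul_apply, h]
  invFun L := ⟨(L : Matrix (Fin n) (Fin n) ℂ) - (L : Matrix (Fin n) (Fin n) ℂ)ᴴ, by
    constructor
    · simp [conjTranspose_sub]
    · intro i
      have := L.2 i i le_rfl
      simp [Matrix.sub_apply, conjTranspose_apply, this]⟩
  left_inv M := by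
    obtain ⟨h1, h2⟩ := M.2
    ext i j
    rcases lt_trichotomy j i with h | h | h
    · simp [lowerProj, conjTranspose_apply, h, not_lt.mpr h.le]
    · subst h; simp [lowerProj, h2 j]
    · have : (starRingEnd ℂ) ((M : Matrix (Fin n) (Fin n) ℂ) j i) = -(M : Matrix (Fin n) (Fin n) ℂ) i j := by
        have := congrFun (congrFun h1 i) j
        simpa [conjTranspose_apply] using this
      simp [lowerProj, conjTranspose_apply, h, not_lt.mpr h.le, this]
  right_inv L := by
    ext i j
    by_cases h : j < i
    · have : (L : Matrix (Fin n) (Fin n) ℂ) j i = 0 := L.2 j i h.le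
      simp [lowerProj, Matrix.sub_apply, conjTranspose_apply, h, this]
    · have : (L : Matrix (Fin n) (Fin n) ℂ) i j = 0 := L.2 i j (not_lt.mp h)
      simp [lowerProj, h, this]

/-- The real-linear map `C_T : iH₀ → T^sl`, `M ↦ π (M T − T M)`. -/
noncomputable def commProj (n : ℕ) (T : Matrix (Fin n) (Fin n) ℂ) : iH0 n →ₗ[ℝ] Tsl n where
  toFun M := ⟨lowerProj n ((M : Matrix (Fin n) (Fin n) ℂ) * T - T * M),
    fun i j hij => by simp [lowerProj, Matrix.of_apply, not_lt.mpr hij]⟩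
  map_add' M N := by
    ext i j
    by_cases h : j < i <;>
      simp [lowerProj, Matrix.add_mul, Matrix.mul_add, Matrix.sub_apply, Matrix.add_apply, h] <;> ring
  map_smul' c M := by
    ext i j
    by_cases h : j < i <;>
      simp [lowerProj, Matrix.smul_mul, Matrix.mul_smul, Matrix.sub_apply, Matrix.smul_apply, h, smul_sub]

theorem commProj_injective (n : ℕ) (T : Matrix (Fin n) (Fin n) ℂ)
    (hT : ∀ i j : Fin n, j < i → T i j = 0)
    (hdiag : ∀ i j : Fin n, i ≠ j → T i i ≠ T j j) :
    Function.Injective (commProj n T) := by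
  rw [injective_iff_map_eq_zero]
  rintro ⟨M, hM1, hM2⟩ hK
  have hK' : ∀ i j : Fin n, j < i → (M * T - T * M) i j = 0 := by
    intro i j hij
    have := congrArg Subtype.val hK
    have h2 := congrFun (congrFun this i) j
    simpa [commProj, lowerProj, hij] using h2
  have low : ∀ d : ℕ, ∀ i j : Fin n, j < i → n - d ≤ (i : ℕ) - (j : ℕ) → M i j = 0 := by
    intro d
    induction d with
    | zero =>
      intro i j hij hle
      exfalso
      have : (i : ℕ) < n := i.isLt
      omega
    | succ d ih =>
      intro i j hij hle
      have h0 := hK' i j hij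
      have hMT : (M * T) i j = M i j * T j j := by
        rw [mul_apply]
        apply Finset.sum_eq_single j
        · intro k _ hk
          rcases lt_or_gt_of_ne hk with h | h
          · have hki : k < i := h.trans hij
            have : M i k = 0 := ih i k hki (by
              have h1 : (k : ℕ) < j := h
              have h2 : (j : ℕ) < i := hij
              omega)
            simp [this]
          · have : T k j = 0 := hT k j h
            simp [this]
        · simp
      have hTM : (T * M) i j = T i i * M i j := by
        rw [mul_apply]
        apply Finset.sum_eq_single i
        · intro k _ hk
          rcases lt_or_gt_of_ne hk with h | h
          · have : T i k = 0 := hT i k h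
            simp [this]
          · have hjk : j < k := hij.trans h
            have : M k j = 0 := ih k j hjk (by
              have h1 : (i : ℕ) < k := h
              have h2 : (j : ℕ) < i := hij
              omega)
            simp [this]
        · simp
      have heq : M i j * (T j j - T i i) = 0 := by
        have := h0
        rw [Matrix.sub_apply, hMT, hTM] at this
        ring_nf
        ring_nf at this
        linear_combination this
      have hne : T j j - T i i ≠ 0 := sub_ne_zero.mpr (hdiag j i (Fin.ne_of_lt hij))
      exact (mul_eq_zero.mp heq).resolve_right hne
  have lowAll : ∀ i j : Fin n, j < i → M i j = 0 := fun i j hij =>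
    low n i j hij (by omega)
  apply Subtype.ext
  ext i j
  rcases lt_trichotomy j i with h | h | h
  · simpa using lowAll i j h
  · subst h; simpa using hM2 j
  · have hc : (starRingEnd ℂ) (M j i) = -M i j := by
      have := congrFun (congrFun hM1 i) j
      simpa [conjTranspose_apply] using this
    have : M j i = 0 := lowAll j i h
    rw [this] at hc
    simp at hc
    simpa using hc

/-- If the diagonal entries of the upper triangular matrix `T` are pairwise
distinct, then the real-linear map `C_T : iH₀ → T^sl`, `M ↦ π(MT − TM)`, is a
real-linear isomorphism. -/
theorem commProj_bijective (n : ℕ) (T : Matrix (Fin n) (Fin n) ℂ)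
    (hT : ∀ i j : Fin n, j < i → T i j = 0)
    (hdiag : ∀ i j : Fin n, i ≠ j → T i i ≠ T j j) :
    Function.Bijective (commProj n T) := by
  have hinj := commProj_injective n T hT hdiag
  exact ⟨hinj,
    (LinearMap.injective_iff_surjective_of_finrank_eq_finrank (lowEquiv n).finrank_eq).mp hinj⟩
end

section
/- For z₁,…,zₙ ∈ ℂ, the set O_{z₁,…,zₙ} := {(t₁,…,tₙ) ∈ ℂⁿ : for all i < j, |zᵢ − tᵢ| < |zᵢ − tⱼ|} is admissible: the permuted copies σ·O := {(t_{σ(1)},…,t_{σ(n)}) : t ∈ O}, σ ∈ Sₙ, are pairwise disjoint open sets, and the complement of their union in ℂⁿ has Lebesgue measure zero. -/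
open MeasureTheory

/-- The set `O_{z₁,…,zₙ} = {t ∈ ℂⁿ : ∀ i < j, |zᵢ − tᵢ| < |zᵢ − tⱼ|}`. -/
def Oset (n : ℕ) (z : Fin n → ℂ) : Set (Fin n → ℂ) :=
  {t | ∀ i j : Fin n, i < j → ‖z i - t i‖ < ‖z i - t j‖}

/-- The "equal distance" condition set is null. -/
lemma Oset_null_aux (n : ℕ) (c : ℂ) (a b : Fin n) (hab : a ≠ b) :
    volume {s : Fin n → ℂ | ‖c - s a‖ = ‖c - s b‖} = 0 := by
  classical
  have hb : ¬ (fun j : Fin n => j ≠ b) b := fun h => h rfl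
  set p : Fin n → Prop := fun j => j ≠ b with hp
  have hmp : MeasurePreserving (MeasurableEquiv.piEquivPiSubtypeProd (fun _ : Fin n => ℂ) p) :=
    volume_preserving_piEquivPiSubtypeProd (fun _ : Fin n => ℂ) p
  set T : Set (({j : Fin n // p j} → ℂ) × ({j : Fin n // ¬ p j} → ℂ)) :=
    {q | ‖c - q.1 ⟨a, hab⟩‖ = ‖c - q.2 ⟨b, hb⟩‖} with hT
  have hTm : MeasurableSet T := by
    apply measurableSet_eq_fun
    · exact (continuous_norm.comp
        (continuous_const.sub ((continuous_apply _).comp continuous_fst))).measurable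
    · exact (continuous_norm.comp
        (continuous_const.sub ((continuous_apply _).comp continuous_snd))).measurable
  have hpre : {s : Fin n → ℂ | ‖c - s a‖ = ‖c - s b‖} =
      (MeasurableEquiv.piEquivPiSubtypeProd (fun _ : Fin n => ℂ) p) ⁻¹' T := rfl
  rw [hpre, hmp.measure_preimage hTm.nullMeasurableSet, Measure.volume_eq_prod,
    Measure.measure_prod_null hTm]
  filter_upwards with x
  have hslice : (Prod.mk x ⁻¹' T) =
      Function.eval (⟨b, hb⟩ : {j : Fin n // ¬ p j}) ⁻¹'
        (Metric.sphere c (‖c - x ⟨a, hab⟩‖)) := by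
    ext y
    simp only [Set.mem_preimage, T, Set.mem_setOf_eq, Function.eval, Metric.mem_sphere,
      Complex.dist_eq]
    constructor
    · intro h
      rw [← norm_neg]
      simp [← h]
    · intro h
      rw [← norm_neg (y ⟨b, hb⟩ - c)] at h
      simp at h
      exact h.symm
  rw [hslice, MeasureTheory.volume_pi]
  exact Measure.pi_eval_preimage_null _ (Measure.addHaar_sphere _ c _)

/-- Uniqueness of the permutation bringing `s` into `Oset`. -/
lemma Oset_perm_unique (n : ℕ) (z : Fin n → ℂ) (s : Fin n → ℂ) (π ρ : Equiv.Perm (Fin n))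
    (hπ : (s ∘ ⇑π) ∈ Oset n z) (hρ : (s ∘ ⇑ρ) ∈ Oset n z) : π = ρ := by
  classical
  by_contra hne
  have hex : ∃ i, π i ≠ ρ i := by
    by_contra h
    push_neg at h
    exact hne (Equiv.ext h)
  obtain ⟨i0, hi0⟩ := hex
  set D : Finset (Fin n) := Finset.univ.filter (fun i => π i ≠ ρ i) with hD
  have hDne : D.Nonempty := ⟨i0, by simp [hD, hi0]⟩
  set i := D.min' hDne with hidef
  have hi : π i ≠ ρ i := by
    have := D.min'_mem hDne
    simp only [hD, Finset.mem_filter] at this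
    exact this.2
  have hagree : ∀ k, k < i → π k = ρ k := by
    intro k hk
    by_contra hkk
    exact absurd (D.min'_le k (by simp [hD, hkk])) (not_le.2 hk)
  -- first inequality
  have key : ∀ (π ρ : Equiv.Perm (Fin n)), (s ∘ ⇑π) ∈ Oset n z → π i ≠ ρ i →
      (∀ k, k < i → π k = ρ k) →
      ‖z i - s (π i)‖ < ‖z i - s (ρ i)‖ := by
    intro π ρ hπ hi hagree
    set j := π.symm (ρ i) with hj
    have hπj : π j = ρ i := π.apply_symm_apply _
    have hji : j ≠ i := fun h => hi (by rw [← hπj, h])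
    have hij : i < j := by
      by_contra hle
      have hjlt : j < i := lt_of_le_of_ne (not_lt.1 hle) hji
      have h1 := hagree j hjlt
      exact hji (ρ.injective (by rw [← h1, hπj]))
    have := hπ i j hij
    simpa [hπj] using this
  have h1 := key π ρ hπ hi hagree
  have h2 := key ρ π hρ (Ne.symm hi) (fun k hk => (hagree k hk).symm)
  exact absurd h2 (not_lt.2 h1.le)

/-- The set `O_{z₁,…,zₙ}` is admissible: its permuted copies
`σ·O = {(t_{σ(1)},…,t_{σ(n)}) : t ∈ O}` are pairwise disjoint open sets whose
union has null complement for the Lebesgue measure on `ℂⁿ`. -/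
theorem Oset_admissible (n : ℕ) (z : Fin n → ℂ) :
    (∀ σ : Equiv.Perm (Fin n), IsOpen ((fun t : Fin n → ℂ => t ∘ σ) '' Oset n z)) ∧
    (∀ σ τ : Equiv.Perm (Fin n), σ ≠ τ →
      Disjoint ((fun t : Fin n → ℂ => t ∘ σ) '' Oset n z)
        ((fun t : Fin n → ℂ => t ∘ τ) '' Oset n z)) ∧
    volume (⋃ σ : Equiv.Perm (Fin n), (fun t : Fin n → ℂ => t ∘ σ) '' Oset n z)ᶜ = 0 := by
  classical
  have hO : IsOpen (Oset n z) := by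
    have heq : Oset n z = ⋂ i, ⋂ j,
        {t : Fin n → ℂ | i < j → ‖z i - t i‖ < ‖z i - t j‖} := by
      ext t
      simp only [Oset, Set.mem_setOf_eq, Set.mem_iInter]
    rw [heq]
    refine isOpen_iInter_of_finite fun i => isOpen_iInter_of_finite fun j => ?_
    by_cases h : i < j
    · simp only [h, true_implies]
      exact isOpen_lt
        (continuous_norm.comp (continuous_const.sub (continuous_apply i)))
        (continuous_norm.comp (continuous_const.sub (continuous_apply j)))
    · simp [h]
  have himg : ∀ σ : Equiv.Perm (Fin n),
      (fun t : Fin n → ℂ => t ∘ σ) '' Oset n z = (fun t : Fin n → ℂ => t ∘ ⇑σ⁻¹) ⁻¹' Oset n z := by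
    intro σ
    ext y
    constructor
    · rintro ⟨t, ht, rfl⟩
      have h : (t ∘ ⇑σ) ∘ ⇑σ⁻¹ = t := by funext k; simp
      simpa only [Set.mem_preimage, h] using ht
    · intro hy
      exact ⟨y ∘ ⇑σ⁻¹, hy, by funext k; simp⟩
  refine ⟨?_, ?_, ?_⟩
  · intro σ
    rw [himg σ]
    exact hO.preimage (continuous_pi fun k => continuous_apply _)
  · intro σ τ hne
    rw [Set.disjoint_left]
    rintro a ⟨t, ht, hta⟩ ⟨u, hu, hua⟩
    have h1 : a ∘ ⇑σ⁻¹ ∈ Oset n z := by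
      have : a ∘ ⇑σ⁻¹ = t := by
        funext k; rw [← hta]; simp
      rwa [this]
    have h2 : a ∘ ⇑τ⁻¹ ∈ Oset n z := by
      have : a ∘ ⇑τ⁻¹ = u := by
        funext k; rw [← hua]; simp
      rwa [this]
    exact hne (inv_injective (Oset_perm_unique n z a σ⁻¹ τ⁻¹ h1 h2))
  · set B : Set (Fin n → ℂ) := ⋃ i : Fin n, ⋃ a : Fin n, ⋃ b : Fin n, ⋃ _ : a ≠ b,
      {s : Fin n → ℂ | ‖z i - s a‖ = ‖z i - s b‖} with hBdef
    have hB : volume B = 0 :=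
      measure_iUnion_null fun i => measure_iUnion_null fun a => measure_iUnion_null fun b =>
        measure_iUnion_null fun hab => Oset_null_aux n (z i) a b hab
    refine measure_mono_null ?_ hB
    intro s hs
    by_contra hsB
    simp only [hBdef, Set.mem_iUnion, not_exists, Set.mem_setOf_eq] at hsB
    -- pick a lexicographically minimal permutation
    letI : LinearOrder (Lex (∀ _ : Fin n, ℝ)) := by
      have h : WellFoundedLT (Fin n) := inferInstance
      exact @Pi.Lex.linearOrder (Fin n) (fun _ => ℝ) _ h _
    set F : Equiv.Perm (Fin n) → Lex (∀ _ : Fin n, ℝ) :=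
      fun π => toLex (fun i => ‖z i - s (π i)‖) with hF
    obtain ⟨π, -, hmin⟩ := Finset.exists_min_image Finset.univ F ⟨1, Finset.mem_univ 1⟩
    have hmem : s ∘ ⇑π ∈ Oset n z := by
      intro i j hij
      by_contra hcon
      simp only [Function.comp_apply] at hcon
      have hgt : ‖z i - s (π j)‖ < ‖z i - s (π i)‖ :=
        lt_of_le_of_ne (not_lt.1 hcon)
          (hsB i (π j) (π i) (fun h => (hij.ne (π.injective h.symm))))
      set π' : Equiv.Perm (Fin n) := π * Equiv.swap i j with hπ'
      have hlt : F π' < F π := by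
        refine ⟨i, fun k hk => ?_, ?_⟩
        · have h1 : π' k = π k := by
            rw [hπ', Equiv.Perm.mul_apply,
              Equiv.swap_apply_of_ne_of_ne hk.ne (hk.trans hij).ne]
          simp [hF, h1]
        · have h2 : π' i = π j := by
            rw [hπ', Equiv.Perm.mul_apply, Equiv.swap_apply_left]
          simpa [hF, h2] using hgt
      exact absurd (hmin π' (Finset.mem_univ _)) (not_le.2 hlt)
    exact hs (Set.mem_iUnion.2 ⟨π⁻¹, ⟨s ∘ ⇑π, hmem, by funext k; simp⟩⟩)
end
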